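/- The unique fixed point ε₀ of g(δ) = (1-δ)·[Φ((1/3)(y_δ + 2√(y_δ²+6 ln 2))) - Φ((1/3)(2 y_δ + √(y_δ²+6 ln 2)))] with y_δ = Φ⁻¹(δ/(1-δ)) satisfies 1/5 < ε₀ < 1/4. -/

import Mathlib

open MeasureTheory ProbabilityTheory

/-- The standard normal cumulative distribution function. -/
noncomputable def Phi (x : ℝ) : ℝ := ((gaussianReal 0 1) (Set.Iic x)).toReal

/-- The inverse of the standard normal CDF. -/
noncomputable def PhiInv : ℝ → ℝ := Function.invFun Phi

/-- The normal quantile `y_δ = Φ⁻¹(δ/(1-δ))`. -/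
noncomputable def yq (δ : ℝ) : ℝ := PhiInv (δ / (1 - δ))

/-- The function `g` from the location-scale breakdown analysis. -/
noncomputable def gfun (δ : ℝ) : ℝ :=
  (1 - δ) *
    (Phi ((yq δ + 2 * Real.sqrt (yq δ ^ 2 + 6 * Real.log 2)) / 3) -
      Phi ((2 * yq δ + Real.sqrt (yq δ ^ 2 + 6 * Real.log 2)) / 3))

/-! ### Auxiliary development -/

/-- Standard normal density. -/
noncomputable def gpdf (x : ℝ) : ℝ := (Real.sqrt (2 * Real.pi))⁻¹ * Real.exp (-x ^ 2 / 2)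

lemma gpdf_eq : gaussianPDFReal 0 1 = gpdf := by
  funext x
  simp [gaussianPDFReal, gpdf]

lemma gpdf_cont : Continuous gpdf := by
  unfold gpdf; fun_prop

lemma gpdf_pos (x : ℝ) : 0 < gpdf x := by
  rw [← gpdf_eq]; exact gaussianPDFReal_pos _ _ _ one_ne_zero

lemma gpdf_integrable : Integrable gpdf := gpdf_eq ▸ integrable_gaussianPDFReal 0 1

lemma Phi_eq (x : ℝ) : Phi x = ∫ t in Set.Iic x, gpdf t := by
  rw [Phi, gaussianReal_apply_eq_integral 0 one_ne_zero, gpdf_eq,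
    ENNReal.toReal_ofReal (integral_nonneg fun t => (gpdf_pos t).le)]

lemma Phi_diff (a b : ℝ) : Phi b - Phi a = ∫ t in a..b, gpdf t := by
  rw [Phi_eq, Phi_eq]
  exact intervalIntegral.integral_Iic_sub_Iic gpdf_integrable.integrableOn
    gpdf_integrable.integrableOn

lemma Phi_mono : StrictMono Phi := by
  intro a b hab
  have h : 0 < ∫ t in a..b, gpdf t :=
    intervalIntegral.intervalIntegral_pos_of_pos (gpdf_cont.intervalIntegrable a b)
      gpdf_pos hab
  have := Phi_diff a b
  linarith

lemma Phi_neg (x : ℝ) : Phi (-x) = 1 - Phi x := by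
  have heven : ∀ t : ℝ, gpdf (-t) = gpdf t := by intro t; simp [gpdf]
  have h1 : (∫ t in Set.Iic (-x), gpdf t) = ∫ t in Set.Ioi x, gpdf t := by
    have h := integral_comp_neg_Iic (-x) gpdf
    simp_rw [heven, neg_neg] at h
    exact h
  have h2 : (∫ t in Set.Iic x, gpdf t) + ∫ t in Set.Ioi x, gpdf t = ∫ t, gpdf t :=
    intervalIntegral.integral_Iic_add_Ioi gpdf_integrable.integrableOn
      gpdf_integrable.integrableOn
  have h3 : (∫ t, gpdf t) = 1 := gpdf_eq ▸ integral_gaussianPDFReal_eq_one 0 one_ne_zero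
  rw [Phi_eq, Phi_eq, h1]
  linarith

lemma Phi_zero : Phi 0 = 1 / 2 := by
  have := Phi_neg 0; rw [neg_zero] at this; linarith

lemma Phi_continuous : Continuous Phi := by
  have h : ∀ x : ℝ, Phi x = Phi 0 + ∫ t in (0:ℝ)..x, gpdf t := by
    intro x; have := Phi_diff 0 x; linarith
  have hc : Continuous fun x : ℝ => Phi 0 + ∫ t in (0:ℝ)..x, gpdf t :=
    continuous_const.add (intervalIntegral.continuous_primitive
      (fun a b => gpdf_cont.intervalIntegrable a b) 0)
  exact (funext h) ▸ hc

lemma Phi_exists_lt {v : ℝ} (hv : 0 < v) : ∃ y : ℝ, Phi y < v := by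
  by_contra h
  push_neg at h
  have htend : Filter.Tendsto (fun n : ℕ => (gaussianReal 0 1) (Set.Iic (-(n:ℝ))))
      Filter.atTop (nhds ((gaussianReal 0 1) (⋂ n : ℕ, Set.Iic (-(n:ℝ))))) := by
    refine tendsto_measure_iInter_atTop (fun n => measurableSet_Iic.nullMeasurableSet)
      (fun m n hmn => Set.Iic_subset_Iic.mpr
        (by exact_mod_cast neg_le_neg (Nat.cast_le.mpr hmn))) ⟨0, measure_ne_top _ _⟩
  have hempty : (⋂ n : ℕ, Set.Iic (-(n:ℝ))) = ∅ := by
    ext x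
    simp only [Set.mem_iInter, Set.mem_Iic, Set.mem_empty_iff_false, iff_false, not_forall,
      not_le]
    obtain ⟨n, hn⟩ := exists_nat_gt (-x)
    exact ⟨n, by linarith⟩
  rw [hempty, measure_empty] at htend
  have htr : Filter.Tendsto (fun n : ℕ => Phi (-(n:ℝ))) Filter.atTop (nhds 0) := by
    have := (ENNReal.tendsto_toReal ENNReal.zero_ne_top).comp htend
    simpa [Phi, Function.comp_def] using this
  have : (0:ℝ) ≥ v := ge_of_tendsto htr (Filter.Eventually.of_forall fun n => h _)
  linarith

lemma Phi_PhiInv {v : ℝ} (h0 : 0 < v) (h2 : v ≤ 1 / 2) : Phi (PhiInv v) = v := by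
  obtain ⟨y, hy⟩ := Phi_exists_lt h0
  have hy0 : y ≤ 0 := by
    by_contra hc
    push_neg at hc
    have := Phi_mono hc
    rw [Phi_zero] at this
    linarith
  obtain ⟨z, _, hz⟩ := intermediate_value_Icc hy0 Phi_continuous.continuousOn
    (Set.mem_Icc.mpr ⟨hy.le, by rw [Phi_zero]; exact h2⟩)
  exact Function.invFun_eq ⟨z, hz⟩

lemma exp_bounds {x : ℝ} (h : x ^ 2 ≤ 2) :
    1 - x^2/2 + x^4/8 - x^6/48 - 5*x^8/1536 ≤ Real.exp (-x ^ 2 / 2) ∧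
    Real.exp (-x ^ 2 / 2) ≤ 1 - x^2/2 + x^4/8 - x^6/48 + 5*x^8/1536 := by
  have h0 : |(-x ^ 2 / 2)| ≤ 1 := by
    rw [abs_le]; constructor <;> nlinarith [sq_nonneg x]
  have hb := Real.exp_bound h0 (n := 4) (by norm_num)
  rw [abs_le] at hb
  norm_num [Finset.sum_range_succ, Nat.factorial] at hb
  have habs : |(-x ^ 2 / 2)| = x ^ 2 / 2 := by
    rw [abs_of_nonpos (by nlinarith [sq_nonneg x])]; ring
  rw [habs] at hb
  constructor <;> nlinarith [hb.1, hb.2, sq_nonneg x]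

noncomputable def Pl (x : ℝ) : ℝ := x - x^3/6 + x^5/40 - x^7/336 - 5*x^9/13824
noncomputable def Pu (x : ℝ) : ℝ := x - x^3/6 + x^5/40 - x^7/336 + 5*x^9/13824

lemma hasDerivAt_Pl (x : ℝ) :
    HasDerivAt Pl (1 - x^2/2 + x^4/8 - x^6/48 - 5*x^8/1536) x := by
  have h : HasDerivAt (fun x : ℝ => x - x^3/6 + x^5/40 - x^7/336 - 5*x^9/13824)
      (1 - (↑(3:ℕ) * x ^ 2)/6 + (↑(5:ℕ) * x ^ 4)/40 - (↑(7:ℕ) * x ^ 6)/336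
        - 5 * (↑(9:ℕ) * x ^ 8)/13824 ) x :=
    ((((hasDerivAt_id x).sub ((hasDerivAt_pow 3 x).div_const 6)).add
      ((hasDerivAt_pow 5 x).div_const 40)).sub ((hasDerivAt_pow 7 x).div_const 336)).sub
      (((hasDerivAt_pow 9 x).const_mul 5).div_const 13824)
  convert h using 1
  · rfl
  · push_cast; ring

lemma hasDerivAt_Pu (x : ℝ) :
    HasDerivAt Pu (1 - x^2/2 + x^4/8 - x^6/48 + 5*x^8/1536) x := by
  have h : HasDerivAt (fun x : ℝ => x - x^3/6 + x^5/40 - x^7/336 + 5*x^9/13824)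
      (1 - (↑(3:ℕ) * x ^ 2)/6 + (↑(5:ℕ) * x ^ 4)/40 - (↑(7:ℕ) * x ^ 6)/336
        + 5 * (↑(9:ℕ) * x ^ 8)/13824 ) x :=
    ((((hasDerivAt_id x).sub ((hasDerivAt_pow 3 x).div_const 6)).add
      ((hasDerivAt_pow 5 x).div_const 40)).sub ((hasDerivAt_pow 7 x).div_const 336)).add
      (((hasDerivAt_pow 9 x).const_mul 5).div_const 13824)
  convert h using 1
  · rfl
  · push_cast; ring

lemma sqrt_two_pi_lb : 2.50662 ≤ Real.sqrt (2 * Real.pi) := by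
  rw [Real.le_sqrt (by norm_num) (by positivity)]
  nlinarith [Real.pi_gt_d6]

lemma sqrt_two_pi_ub : Real.sqrt (2 * Real.pi) ≤ 2.50663 := by
  rw [Real.sqrt_le_iff]
  refine ⟨by norm_num, ?_⟩
  nlinarith [Real.pi_lt_d6]

lemma integral_gpdf_ge {a b : ℝ} (h0 : 0 ≤ a) (hab : a ≤ b) (hb : b ^ 2 ≤ 2) :
    (Pl b - Pl a) / 2.50663 ≤ ∫ x in a..b, gpdf x := by
  have hint : ∀ x : ℝ, x ∈ Set.Icc a b →
      1 - x^2/2 + x^4/8 - x^6/48 - 5*x^8/1536 ≤ Real.exp (-x ^ 2 / 2) := by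
    intro x hx
    exact (exp_bounds (by nlinarith [hx.1, hx.2])).1
  have h1 : Pl b - Pl a ≤ ∫ x in a..b, Real.exp (-x ^ 2 / 2) := by
    rw [← intervalIntegral.integral_eq_sub_of_hasDerivAt
      (fun x _ => hasDerivAt_Pl x)
      ((Continuous.intervalIntegrable (by continuity) a b))]
    exact intervalIntegral.integral_mono_on hab
      (Continuous.intervalIntegrable (by continuity) a b)
      ((Real.continuous_exp.comp (by continuity)).intervalIntegrable a b) hint
  have h2 : (∫ x in a..b, gpdf x)
      = (Real.sqrt (2 * Real.pi))⁻¹ * ∫ x in a..b, Real.exp (-x ^ 2 / 2) := by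
    simp [gpdf, intervalIntegral.integral_const_mul]
  rw [h2]
  have hP : 0 ≤ ∫ x in a..b, Real.exp (-x ^ 2 / 2) := by
    apply intervalIntegral.integral_nonneg hab
    intro x _; positivity
  have hs : (2.50663:ℝ)⁻¹ ≤ (Real.sqrt (2 * Real.pi))⁻¹ :=
    inv_anti₀ (by positivity) sqrt_two_pi_ub
  calc (Pl b - Pl a) / 2.50663 ≤ (∫ x in a..b, Real.exp (-x ^ 2 / 2)) / 2.50663 := by
        exact div_le_div_of_nonneg_right h1 (by norm_num)
    _ ≤ (Real.sqrt (2 * Real.pi))⁻¹ * ∫ x in a..b, Real.exp (-x ^ 2 / 2) := by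
        rw [div_eq_inv_mul]
        exact mul_le_mul_of_nonneg_right hs hP

lemma integral_gpdf_le {a b : ℝ} (h0 : 0 ≤ a) (hab : a ≤ b) (hb : b ^ 2 ≤ 2) :
    (∫ x in a..b, gpdf x) ≤ (Pu b - Pu a) / 2.50662 := by
  have hint : ∀ x : ℝ, x ∈ Set.Icc a b →
      Real.exp (-x ^ 2 / 2) ≤ 1 - x^2/2 + x^4/8 - x^6/48 + 5*x^8/1536 := by
    intro x hx
    exact (exp_bounds (by nlinarith [hx.1, hx.2])).2
  have h1 : (∫ x in a..b, Real.exp (-x ^ 2 / 2)) ≤ Pu b - Pu a := by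
    rw [← intervalIntegral.integral_eq_sub_of_hasDerivAt
      (fun x _ => hasDerivAt_Pu x)
      ((Continuous.intervalIntegrable (by continuity) a b))]
    exact intervalIntegral.integral_mono_on hab
      ((Real.continuous_exp.comp (by continuity)).intervalIntegrable a b)
      (Continuous.intervalIntegrable (by continuity) a b) hint
  have h2 : (∫ x in a..b, gpdf x)
      = (Real.sqrt (2 * Real.pi))⁻¹ * ∫ x in a..b, Real.exp (-x ^ 2 / 2) := by
    simp [gpdf, intervalIntegral.integral_const_mul]
  rw [h2]
  have hP : 0 ≤ ∫ x in a..b, Real.exp (-x ^ 2 / 2) := by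
    apply intervalIntegral.integral_nonneg hab
    intro x _; positivity
  have hs : (Real.sqrt (2 * Real.pi))⁻¹ ≤ (2.50662:ℝ)⁻¹ :=
    inv_anti₀ (by norm_num) sqrt_two_pi_lb
  calc (Real.sqrt (2 * Real.pi))⁻¹ * ∫ x in a..b, Real.exp (-x ^ 2 / 2)
      ≤ (2.50662:ℝ)⁻¹ * ∫ x in a..b, Real.exp (-x ^ 2 / 2) :=
        mul_le_mul_of_nonneg_right hs hP
    _ ≤ (2.50662:ℝ)⁻¹ * (Pu b - Pu a) := mul_le_mul_of_nonneg_left h1 (by norm_num)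
    _ = (Pu b - Pu a) / 2.50662 := by ring

lemma numeric_N1 : 1/4 < Phi 1.17 - Phi 0.31 := by
  rw [Phi_diff]
  refine lt_of_lt_of_le ?_ (integral_gpdf_ge (by norm_num) (by norm_num) (by norm_num))
  unfold Pl
  norm_num

lemma numeric_N2 : Phi 1.40 - Phi 0.38 < 1/3 := by
  rw [Phi_diff]
  refine lt_of_le_of_lt (integral_gpdf_le (by norm_num) (by norm_num) (by norm_num)) ?_
  unfold Pu
  norm_num

lemma numeric_N3 : Phi 0.6 - Phi 0 < 1/4 := by
  rw [Phi_diff]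
  refine lt_of_le_of_lt (integral_gpdf_le (by norm_num) (by norm_num) (by norm_num)) ?_
  unfold Pu
  norm_num

lemma numeric_N4 : 1/6 < Phi 0.44 - Phi 0 := by
  rw [Phi_diff]
  refine lt_of_lt_of_le ?_ (integral_gpdf_ge (by norm_num) (by norm_num) (by norm_num))
  unfold Pl
  norm_num

set_option maxHeartbeats 2000000 in
/-- The fixed point `ε₀` of `g` satisfies `1/5 < ε₀ < 1/4`. -/
theorem fixed_point_bounds (ε₀ : ℝ) (hε₀ : ε₀ ∈ Set.Ioo (0 : ℝ) (1 / 3))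
    (hfix : gfun ε₀ = ε₀) : 1 / 5 < ε₀ ∧ ε₀ < 1 / 4 := by
  obtain ⟨hδ0, hδ3⟩ := hε₀
  have h1δ : (0:ℝ) < 1 - ε₀ := by linarith
  have hv0 : 0 < ε₀ / (1 - ε₀) := div_pos hδ0 h1δ
  have hv2 : ε₀ / (1 - ε₀) < 1 / 2 := by
    rw [div_lt_iff₀ h1δ]; linarith
  have hPhiy : Phi (yq ε₀) = ε₀ / (1 - ε₀) := Phi_PhiInv hv0 hv2.le
  unfold gfun at hfix
  set y := yq ε₀ with hy_def
  set s := Real.sqrt (y ^ 2 + 6 * Real.log 2) with hs_def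
  have hlog2_lb : (0.6931471803:ℝ) < Real.log 2 := Real.log_two_gt_d9
  have hlog2_ub : Real.log 2 < 0.6931471808 := Real.log_two_lt_d9
  have hs0 : 0 ≤ s := Real.sqrt_nonneg _
  have hs2 : s ^ 2 = y ^ 2 + 6 * Real.log 2 := by
    rw [hs_def, Real.sq_sqrt (by positivity)]
  have hyneg : y < 0 := by
    by_contra hc
    push_neg at hc
    have := Phi_mono.monotone hc
    rw [Phi_zero, hPhiy] at this
    linarith
  have hsy : -y ≤ s := by
    rw [hs_def, Real.le_sqrt (by linarith) (by positivity)]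
    nlinarith
  clear_value s y
  clear hs_def hy_def
  constructor
  · -- 1/5 < ε₀
    by_contra hc
    push_neg at hc
    -- Phi y ≤ 1/4
    have hv14 : Phi y ≤ 1 / 4 := by
      rw [hPhiy, div_le_iff₀ h1δ]; linarith
    -- Phi (-(3/5)) > 1/4
    have hPhi35 : 1 / 4 < Phi (-(3/5)) := by
      have h := Phi_neg (3/5)
      have h2 := numeric_N3
      rw [Phi_zero] at h2
      have : Phi (3/5) = Phi 0.6 := by norm_num
      rw [this] at h
      linarith
    have hy35 : y ≤ -(3/5) := by
      by_contra hc2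
      push_neg at hc2
      have := Phi_mono hc2
      linarith
    -- the point m = sqrt (2 log 2)
    obtain ⟨m, hm0, hm2⟩ : ∃ m : ℝ, 0 ≤ m ∧ m ^ 2 = 2 * Real.log 2 :=
      ⟨Real.sqrt (2 * Real.log 2), Real.sqrt_nonneg _, Real.sq_sqrt (by positivity)⟩
    have hm117 : (1.17:ℝ) ≤ m := by
      clear hfix hPhiy hv0 hv2 hv14 hPhi35
      nlinarith
    have hA : m ≤ (y + 2 * s) / 3 := by
      rw [le_div_iff₀ (by norm_num)]
      have hpos : 0 < 2 * s + 3 * m - y := by linarith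
      clear hfix hPhiy hv0 hv2 hv14 hPhi35
      nlinarith [sq_nonneg (y + m)]
    -- bound B
    obtain ⟨s₀, hs₀0, hs₀2⟩ : ∃ t : ℝ, 0 ≤ t ∧ t ^ 2 = (3/5) ^ 2 + 6 * Real.log 2 :=
      ⟨Real.sqrt ((3/5) ^ 2 + 6 * Real.log 2), Real.sqrt_nonneg _, Real.sq_sqrt (by positivity)⟩
    have hs₀lb : (3/5:ℝ) ≤ s₀ := by
      clear hfix hPhiy hv0 hv2 hv14 hPhi35
      nlinarith
    have hs₀ub : s₀ ≤ 2.13 := by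
      clear hfix hPhiy hv0 hv2 hv14 hPhi35
      nlinarith
    have hB : (2 * y + s) / 3 ≤ 0.31 := by
      rw [div_le_iff₀ (by norm_num)]
      have hkey : s - s₀ ≤ -(6/5) - 2 * y := by
        clear hfix hPhiy hv0 hv2 hv14 hPhi35
        have hpos : 0 < s + s₀ := by linarith
        nlinarith [mul_nonneg (show (0:ℝ) ≤ -y - 3/5 by linarith)
          (show (0:ℝ) ≤ s + s₀ - (-y + 3/5) by linarith), sq_nonneg (y + 3/5)]
      linarith
    have hbr : 1 / 4 < Phi ((y + 2 * s) / 3) - Phi ((2 * y + s) / 3) := by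
      have h1 : Phi 1.17 ≤ Phi ((y + 2 * s) / 3) := Phi_mono.monotone (by linarith)
      have h2 : Phi ((2 * y + s) / 3) ≤ Phi 0.31 := Phi_mono.monotone (by linarith)
      have := numeric_N1
      linarith
    have hmul : (4/5:ℝ) * (Phi ((y + 2 * s) / 3) - Phi ((2 * y + s) / 3))
        ≤ (1 - ε₀) * (Phi ((y + 2 * s) / 3) - Phi ((2 * y + s) / 3)) :=
      mul_le_mul_of_nonneg_right (by linarith) (by linarith)
    rw [hfix] at hmul
    linarith
  · -- ε₀ < 1/4
    by_contra hc
    push_neg at hc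
    have hv13 : 1 / 3 ≤ Phi y := by
      rw [hPhiy, le_div_iff₀ h1δ]; linarith
    -- Phi (-(0.44)) < 1/3
    have hPhi44 : Phi (-(0.44)) < 1 / 3 := by
      have h := Phi_neg 0.44
      have h2 := numeric_N4
      rw [Phi_zero] at h2
      linarith
    have hy44 : -(0.44:ℝ) ≤ y := by
      by_contra hc2
      push_neg at hc2
      have := Phi_mono.monotone hc2.le
      linarith
    have hslb : (2.03:ℝ) ≤ s := by
      clear hfix hPhiy hv0 hv2 hv13 hPhi44
      nlinarith [sq_nonneg y]
    have hsub : s ≤ 2.1 := by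
      clear hfix hPhiy hv0 hv2 hv13 hPhi44
      nlinarith [sq_nonneg (y + 0.44)]
    have hb038 : (0.38:ℝ) ≤ (2 * y + s) / 3 := by
      rw [le_div_iff₀ (by norm_num)]; linarith
    have ha14 : (y + 2 * s) / 3 ≤ 1.40 := by
      rw [div_le_iff₀ (by norm_num)]; linarith
    have hba : (2 * y + s) / 3 ≤ (y + 2 * s) / 3 := by
      apply div_le_div_of_nonneg_right (by linarith) (by norm_num)
    have hbr_ub : Phi ((y + 2 * s) / 3) - Phi ((2 * y + s) / 3) < 1 / 3 := by
      have h1 : Phi ((y + 2 * s) / 3) ≤ Phi 1.40 := Phi_mono.monotone ha14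
      have h2 : Phi 0.38 ≤ Phi ((2 * y + s) / 3) := Phi_mono.monotone hb038
      have := numeric_N2
      linarith
    have hbr_nn : 0 ≤ Phi ((y + 2 * s) / 3) - Phi ((2 * y + s) / 3) :=
      sub_nonneg.mpr (Phi_mono.monotone hba)
    have hmul : (1 - ε₀) * (Phi ((y + 2 * s) / 3) - Phi ((2 * y + s) / 3))
        ≤ (3/4:ℝ) * (Phi ((y + 2 * s) / 3) - Phi ((2 * y + s) / 3)) :=
      mul_le_mul_of_nonneg_right (by linarith) hbr_nn
    rw [hfix] at hmul
    linarith
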